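/- Let U ⊆ ℂ^n be open with u_a ≠ u_b for every u ∈ U and all a ≠ b. Let A : U → M_n(ℂ) and ω_1^0,…,ω_n^0 : U → M_n(ℂ) be differentiable. Define ω_0(z,u) = Λ(u) + A(u)/z and ω_j(z,u) = zE_j + ω_j^0(u) for z ∈ ℂ∖{0}. Suppose that for all u ∈ U, all z ≠ 0, all j, and all k ≠ j: (a) ∂ω_0/∂u_j + ω_0 ω_j = ∂ω_j/∂z + ω_j ω_0, and (b) ∂ω_j/∂u_k + ω_j ω_k = ∂ω_k/∂u_j + ω_k ω_j. Then for all u ∈ U, all j, and all k ≠ j: (i) [Λ(u), ω_j^0(u)] = [E_j, A(u)]; (ii) ∂A/∂u_j = [ω_j^0, A]; (iii) ∂ω_j^0/∂u_k + ω_j^0 ω_k^0 = ∂ω_k^0/∂u_j + ω_k^0 ω_j^0; (iv) [E_j, ω_k^0] = [E_k, ω_j^0]. -/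

import Mathlib

open Matrix

/-- Partial derivative in the `j`-th coordinate direction of a matrix-valued function
of `u ∈ ℂ^N`, computed entrywise. -/
noncomputable def mpdv {N n : ℕ} (j : Fin N) (A : (Fin N → ℂ) → Matrix (Fin n) (Fin n) ℂ)
    (u : Fin N → ℂ) : Matrix (Fin n) (Fin n) ℂ :=
  Matrix.of fun a b => fderiv ℂ (fun v => A v a b) u (Pi.single j 1)

/-- One direction of Lemma B.2: the Frobenius integrability conditions of the Pfaffian
system with `ω_0(z,u) = Λ(u) + A(u)/z` and `ω_j(z,u) = zE_j + ω_j⁰(u)` imply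
(i) `[Λ, ω_j⁰] = [E_j, A]`, (ii) `∂A/∂u_j = [ω_j⁰, A]`,
(iii) the Frobenius condition for the `ω_j⁰`, and (iv) `[E_j, ω_k⁰] = [E_k, ω_j⁰]`. -/
lemma lem3 {n : ℕ} (k : Fin n) (C : Matrix (Fin n) (Fin n) ℂ)
    (f : (Fin n → ℂ) → Matrix (Fin n) (Fin n) ℂ) (u : Fin n → ℂ) :
    mpdv k (fun v => C + f v) u = mpdv k f u := by
  ext a b
  simp only [mpdv, Matrix.of_apply, Matrix.add_apply, fderiv_const_add]

lemma lem2 {n : ℕ} (j : Fin n) (M : Matrix (Fin n) (Fin n) ℂ) (z : ℂ) :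
    (Matrix.of fun a b => deriv (fun w : ℂ => (w • Matrix.single j j (1:ℂ) + M) a b) z)
      = Matrix.single j j (1:ℂ) := by
  ext a b
  simp only [Matrix.of_apply, Matrix.add_apply, Matrix.smul_apply, smul_eq_mul]
  rw [deriv_add_const, deriv_mul_const differentiableAt_id]
  simp

lemma lem1 {n : ℕ} (j : Fin n) (c : ℂ) (A : (Fin n → ℂ) → Matrix (Fin n) (Fin n) ℂ)
    (u : Fin n → ℂ) (hA : ∀ a b, DifferentiableAt ℂ (fun v => A v a b) u) :
    mpdv j (fun v => Matrix.diagonal v + c • A v) u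
      = Matrix.single j j 1 + c • mpdv j A u := by
  ext a b
  simp only [mpdv, Matrix.of_apply, Matrix.add_apply, Matrix.smul_apply, smul_eq_mul]
  by_cases hab : a = b
  · subst hab
    simp only [Matrix.diagonal_apply_eq]
    have hproj : DifferentiableAt ℂ (fun v : Fin n → ℂ => v a) u :=
      (ContinuousLinearMap.proj a : (Fin n → ℂ) →L[ℂ] ℂ).differentiableAt
    rw [fderiv_fun_add hproj ((hA a a).const_mul c)]
    rw [fderiv_const_mul (hA a a)]
    have : fderiv ℂ (fun v : Fin n → ℂ => v a) u
        = (ContinuousLinearMap.proj a : (Fin n → ℂ) →L[ℂ] ℂ) :=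
      (ContinuousLinearMap.proj a : (Fin n → ℂ) →L[ℂ] ℂ).fderiv
    simp [this, Matrix.single, Pi.single_apply, eq_comm]
  · simp only [Matrix.diagonal_apply_ne _ hab]
    have h0 : Matrix.single j j (1:ℂ) a b = 0 := by
      simp only [Matrix.single, Matrix.of_apply, ite_eq_right_iff]
      rintro ⟨rfl, rfl⟩; exact absurd rfl hab
    simp only [zero_add, fderiv_const_mul (hA a b), h0]
    simp

theorem stmt5 {n : ℕ} (U : Set (Fin n → ℂ)) (hU : IsOpen U)
    (hdist : ∀ u ∈ U, ∀ a b : Fin n, a ≠ b → u a ≠ u b)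
    (A : (Fin n → ℂ) → Matrix (Fin n) (Fin n) ℂ)
    (ω0 : Fin n → (Fin n → ℂ) → Matrix (Fin n) (Fin n) ℂ)
    (hA : ∀ a b, DifferentiableOn ℂ (fun u => A u a b) U)
    (hω0 : ∀ (j : Fin n) (a b : Fin n), DifferentiableOn ℂ (fun u => ω0 j u a b) U)
    (ha : ∀ u ∈ U, ∀ z : ℂ, z ≠ 0 → ∀ j : Fin n,
      mpdv j (fun v => Matrix.diagonal v + z⁻¹ • A v) u
          + (Matrix.diagonal u + z⁻¹ • A u)
            * (z • Matrix.single j j (1 : ℂ) + ω0 j u)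
        = (Matrix.of fun a b =>
            deriv (fun w : ℂ => (w • Matrix.single j j (1 : ℂ) + ω0 j u) a b) z)
          + (z • Matrix.single j j (1 : ℂ) + ω0 j u)
            * (Matrix.diagonal u + z⁻¹ • A u))
    (hb : ∀ u ∈ U, ∀ z : ℂ, z ≠ 0 → ∀ j k : Fin n, k ≠ j →
      mpdv k (fun v => z • Matrix.single j j (1 : ℂ) + ω0 j v) u
          + (z • Matrix.single j j (1 : ℂ) + ω0 j u)
            * (z • Matrix.single k k (1 : ℂ) + ω0 k u)
        = mpdv j (fun v => z • Matrix.single k k (1 : ℂ) + ω0 k v) u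
          + (z • Matrix.single k k (1 : ℂ) + ω0 k u)
            * (z • Matrix.single j j (1 : ℂ) + ω0 j u)) :
    ∀ u ∈ U,
      (∀ j : Fin n,
        (Matrix.diagonal u * ω0 j u - ω0 j u * Matrix.diagonal u
            = Matrix.single j j (1 : ℂ) * A u - A u * Matrix.single j j (1 : ℂ))
        ∧ mpdv j A u = ω0 j u * A u - A u * ω0 j u)
      ∧ (∀ j k : Fin n, k ≠ j →
          (mpdv k (ω0 j) u + ω0 j u * ω0 k u = mpdv j (ω0 k) u + ω0 k u * ω0 j u)
          ∧ (Matrix.single j j (1 : ℂ) * ω0 k u - ω0 k u * Matrix.single j j (1 : ℂ)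
              = Matrix.single k k (1 : ℂ) * ω0 j u
                - ω0 j u * Matrix.single k k (1 : ℂ))) := by

  intro u hu
  have hA' : ∀ a b, DifferentiableAt ℂ (fun v => A v a b) u :=
    fun a b => (hA a b).differentiableAt (hU.mem_nhds hu)
  have key : ∀ z : ℂ, z ≠ 0 → ∀ j : Fin n,
      Matrix.single j j (1:ℂ) + z⁻¹ • mpdv j A u
          + (Matrix.diagonal u + z⁻¹ • A u)
            * (z • Matrix.single j j (1:ℂ) + ω0 j u)
        = Matrix.single j j (1:ℂ)
          + (z • Matrix.single j j (1:ℂ) + ω0 j u)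
            * (Matrix.diagonal u + z⁻¹ • A u) := by
    intro z hz j
    have H := ha u hu z hz j
    rwa [lem1 j z⁻¹ A u hA', lem2] at H
  have keyb : ∀ z : ℂ, z ≠ 0 → ∀ j k : Fin n, k ≠ j →
      mpdv k (ω0 j) u
          + (z • Matrix.single j j (1:ℂ) + ω0 j u)
            * (z • Matrix.single k k (1:ℂ) + ω0 k u)
        = mpdv j (ω0 k) u
          + (z • Matrix.single k k (1:ℂ) + ω0 k u)
            * (z • Matrix.single j j (1:ℂ) + ω0 j u) := by
    intro z hz j k hkj
    have H := hb u hu z hz j k hkj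
    rwa [lem3, lem3] at H
  refine ⟨fun j => ?_, fun j k hkj => ?_⟩
  · have K1 := key 1 one_ne_zero j
    have K2 := key 2 (by norm_num) j
    have K3 := key 3 (by norm_num) j
    simp only [mul_add, add_mul, smul_mul_assoc, mul_smul_comm, smul_smul] at K1 K2 K3
    constructor
    · ext a b
      have e1 := congrFun (congrFun K1 a) b
      have e2 := congrFun (congrFun K2 a) b
      have e3 := congrFun (congrFun K3 a) b
      simp only [Matrix.add_apply, Matrix.smul_apply, Matrix.sub_apply, smul_eq_mul]
        at e1 e2 e3 ⊢
      linear_combination (-5/2 : ℂ) * e1 + 8 * e2 + (-9/2 : ℂ) * e3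
    · ext a b
      have e1 := congrFun (congrFun K1 a) b
      have e2 := congrFun (congrFun K2 a) b
      have e3 := congrFun (congrFun K3 a) b
      simp only [Matrix.add_apply, Matrix.smul_apply, Matrix.sub_apply, smul_eq_mul,
        mpdv, Matrix.of_apply] at e1 e2 e3 ⊢
      linear_combination (3 : ℂ) * e1 - 6 * e2 + 3 * e3
  · have K1 := keyb 1 one_ne_zero j k hkj
    have K2 := keyb 2 (by norm_num) j k hkj
    have K3 := keyb 3 (by norm_num) j k hkj
    simp only [mul_add, add_mul, smul_mul_assoc, mul_smul_comm, smul_smul] at K1 K2 K3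
    constructor
    · ext a b
      have e1 := congrFun (congrFun K1 a) b
      have e2 := congrFun (congrFun K2 a) b
      have e3 := congrFun (congrFun K3 a) b
      simp only [Matrix.add_apply, Matrix.smul_apply, Matrix.sub_apply, smul_eq_mul,
        mpdv, Matrix.of_apply] at e1 e2 e3 ⊢
      linear_combination (3 : ℂ) * e1 - 3 * e2 + e3
    · ext a b
      have e1 := congrFun (congrFun K1 a) b
      have e2 := congrFun (congrFun K2 a) b
      have e3 := congrFun (congrFun K3 a) b
      simp only [Matrix.add_apply, Matrix.smul_apply, Matrix.sub_apply, smul_eq_mul]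
        at e1 e2 e3 ⊢
      linear_combination (-5/2 : ℂ) * e1 + 4 * e2 + (-3/2 : ℂ) * e3
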